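/- In the MAJSAT gadget built from a Boolean function φ on n ≥ 1 variables, the empty coordinate set is stochastically anchor-sufficient (some positive-probability state s has OptS_∅(s) a singleton) if and only if at least half of all assignments satisfy φ, i.e., 2·|{s ∈ S : φ(s) = true}| ≥ 2^n. -/

import Mathlib

/-- Full-information optimizer: actions maximizing pointwise utility at state `s`. -/
def Opt {n : ℕ} {A : Type*} {X : Fin n → Type*}
    (U : A → (∀ i, X i) → ℝ) (s : ∀ i, X i) : Set A :=
  {a | ∀ b, U b s ≤ U a s}

/-- Conditional (unnormalized) expected utility of action `a` over the `I`-fiber of `s`. -/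
noncomputable def condEU {n : ℕ} {A : Type*} {X : Fin n → Type*}
    [∀ i, Fintype (X i)] [∀ i, DecidableEq (X i)]
    (U : A → (∀ i, X i) → ℝ) (P : (∀ i, X i) → ℝ)
    (I : Finset (Fin n)) (s : ∀ i, X i) (a : A) : ℝ :=
  ∑ t ∈ Finset.univ.filter (fun t : ∀ i, X i => ∀ i ∈ I, t i = s i), P t * U a t

/-- Conditional optimizer: actions maximizing conditional expected utility on the `I`-fiber. -/
noncomputable def OptS {n : ℕ} {A : Type*} {X : Fin n → Type*}
    [∀ i, Fintype (X i)] [∀ i, DecidableEq (X i)]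
    (U : A → (∀ i, X i) → ℝ) (P : (∀ i, X i) → ℝ)
    (I : Finset (Fin n)) (s : ∀ i, X i) : Set A :=
  {a | ∀ b, condEU U P I s b ≤ condEU U P I s a}

/-- `I` is statically sufficient: states agreeing on `I` have the same optimizer. -/
def StaticSufficient {n : ℕ} {A : Type*} {X : Fin n → Type*}
    (U : A → (∀ i, X i) → ℝ) (I : Finset (Fin n)) : Prop :=
  ∀ s t : ∀ i, X i, (∀ i ∈ I, s i = t i) → Opt U s = Opt U t

/-- `I` is stochastically sufficient: the conditional optimizer agrees with the
full-information optimizer at every state. -/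
def StochSufficient {n : ℕ} {A : Type*} {X : Fin n → Type*}
    [∀ i, Fintype (X i)] [∀ i, DecidableEq (X i)]
    (U : A → (∀ i, X i) → ℝ) (P : (∀ i, X i) → ℝ) (I : Finset (Fin n)) : Prop :=
  ∀ s : ∀ i, X i, OptS U P I s = Opt U s

/-- `I` is stochastically decisive: every positive-probability state's observed fiber
has a unique conditional optimal action. -/
def StochDecisive {n : ℕ} {A : Type*} {X : Fin n → Type*}
    [∀ i, Fintype (X i)] [∀ i, DecidableEq (X i)]
    (U : A → (∀ i, X i) → ℝ) (P : (∀ i, X i) → ℝ) (I : Finset (Fin n)) : Prop :=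
  ∀ s : ∀ i, X i, 0 < P s → ∃ a : A, OptS U P I s = {a}


/-- The three actions of the MAJSAT gadget. -/
inductive GAct : Type
  | accept : GAct
  | holdL : GAct
  | holdR : GAct
deriving DecidableEq

instance : Fintype GAct where
  elems := {GAct.accept, GAct.holdL, GAct.holdR}
  complete := by intro x; cases x <;> simp

/-- Gadget utility: `accept` pays `1` on satisfying assignments and `0` otherwise;
both hold actions pay the constant `1/2 - 2^{-(n+1)}`. -/
noncomputable def gU (n : ℕ) (φ : (Fin n → Bool) → Bool) :
    GAct → (∀ _ : Fin n, Bool) → ℝ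
  | GAct.accept, s => if φ s then 1 else 0
  | GAct.holdL, _ => 1 / 2 - 1 / 2 ^ (n + 1)
  | GAct.holdR, _ => 1 / 2 - 1 / 2 ^ (n + 1)

/-- Uniform distribution on the Boolean cube. -/
noncomputable def gP (n : ℕ) : (∀ _ : Fin n, Bool) → ℝ := fun _ => 1 / 2 ^ n

lemma condEU_empty {n : ℕ} {A : Type*} (U : A → (Fin n → Bool) → ℝ)
    (P : (Fin n → Bool) → ℝ) (s : Fin n → Bool) (a : A) :
    condEU (X := fun _ : Fin n => Bool) U P (∅ : Finset (Fin n)) s a = ∑ t, P t * U a t := by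
  unfold condEU
  rw [Finset.filter_true_of_mem]
  intro t _ i hi
  exact absurd hi (Finset.notMem_empty i)

theorem majsat_gadget_anchor_sufficiency
    (n : ℕ) (hn : 1 ≤ n) (φ : (Fin n → Bool) → Bool) :
    (∃ s : Fin n → Bool, 0 < gP n s ∧
        ∃ a : GAct, OptS (X := fun _ : Fin n => Bool) (gU n φ) (gP n) (∅ : Finset (Fin n)) s = {a}) ↔
      2 ^ n ≤ 2 * (Finset.univ.filter fun s : Fin n → Bool => φ s = true).card := by
  classical
  set k := (Finset.univ.filter fun s : Fin n → Bool => φ s = true).card with hk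
  have h2 : (0:ℝ) < 2 ^ n := by positivity
  have hA : ∀ s : Fin n → Bool,
      condEU (X := fun _ : Fin n => Bool) (gU n φ) (gP n) (∅ : Finset (Fin n)) s GAct.accept
        = (k : ℝ) / 2 ^ n := by
    intro s
    rw [condEU_empty]
    simp only [gU, gP]
    rw [← Finset.mul_sum, Finset.sum_boole]
    rw [hk]
    ring
  have hcard : (Finset.univ : Finset (Fin n → Bool)).card = 2 ^ n := by
    simp [Finset.card_univ]
  have hH : ∀ (s : Fin n → Bool) (a : GAct), a ≠ GAct.accept →
      condEU (X := fun _ : Fin n => Bool) (gU n φ) (gP n) (∅ : Finset (Fin n)) s a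
        = 1 / 2 - 1 / 2 ^ (n + 1) := by
    intro s a ha
    rw [condEU_empty]
    have hu : ∀ t, gU n φ a t = 1 / 2 - 1 / 2 ^ (n + 1) := by
      intro t; cases a with
      | accept => exact absurd rfl ha
      | holdL => rfl
      | holdR => rfl
    simp only [hu, gP, Finset.sum_const, hcard, nsmul_eq_mul]
    have h2n : (2:ℝ) ^ (n+1) = 2 * 2 ^ n := by ring
    push_cast
    field_simp
  have key : (1 / 2 - 1 / 2 ^ (n + 1) < (k : ℝ) / 2 ^ n) ↔ 2 ^ n ≤ 2 * k := by
    constructor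
    · intro h
      have h' : (2:ℝ) ^ n < 2 * k + 1 := by
        rw [lt_div_iff₀ h2] at h
        have e : (2:ℝ) ^ (n+1) = 2 * 2 ^ n := by ring
        rw [e] at h
        have hexp : (1/2 - 1/(2*(2:ℝ)^n)) * 2 ^ n = 2^n/2 - 1/2 := by
          field_simp
        rw [hexp] at h
        linarith
      have : (2:ℕ) ^ n < 2 * k + 1 := by exact_mod_cast h'
      omega
    · intro h
      have h' : (2:ℝ) ^ n ≤ 2 * k := by exact_mod_cast h
      rw [lt_div_iff₀ h2]
      have e : (2:ℝ) ^ (n+1) = 2 * 2 ^ n := by ring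
      rw [e]
      have hexp : (1/2 - 1/(2*(2:ℝ)^n)) * 2 ^ n = 2^n/2 - 1/2 := by
        field_simp
      rw [hexp]
      linarith
  constructor
  · rintro ⟨s, _, a, ha⟩
    -- holdL and holdR have equal condEU, so the singleton must be accept
    have hsame : condEU (X := fun _ : Fin n => Bool) (gU n φ) (gP n) (∅ : Finset (Fin n)) s GAct.holdL
        = condEU (X := fun _ : Fin n => Bool) (gU n φ) (gP n) (∅ : Finset (Fin n)) s GAct.holdR := by
      rw [hH s GAct.holdL (by simp), hH s GAct.holdR (by simp)]
    have haacc : a = GAct.accept := by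
      by_contra hne
      have hLmem : GAct.holdL ∈ OptS (X := fun _ : Fin n => Bool) (gU n φ) (gP n) (∅ : Finset (Fin n)) s
          ↔ GAct.holdR ∈ OptS (X := fun _ : Fin n => Bool) (gU n φ) (gP n) (∅ : Finset (Fin n)) s := by
        constructor <;> intro hm b <;> [rw [← hsame]; rw [hsame]] <;> exact hm b
      cases a with
      | accept => exact hne rfl
      | holdL =>
        have : GAct.holdR ∈ ({GAct.holdL} : Set GAct) := by
          rw [← ha]; rw [← hLmem]; rw [ha]; rfl
        simp at this
      | holdR =>
        have : GAct.holdL ∈ ({GAct.holdR} : Set GAct) := by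
          rw [← ha]; rw [hLmem]; rw [ha]; rfl
        simp at this
    subst haacc
    -- holdL is not optimal, so accept strictly beats it
    have hnotL : GAct.holdL ∉ OptS (X := fun _ : Fin n => Bool) (gU n φ) (gP n) (∅ : Finset (Fin n)) s := by
      rw [ha]; simp
    rw [key.symm]
    by_contra hle
    push_neg at hle
    apply hnotL
    intro b
    cases b with
    | accept => rw [hA, hH s GAct.holdL (by simp)]; linarith
    | holdL => exact le_refl _
    | holdR => exact hsame.ge
  · intro h
    refine ⟨fun _ => true, by unfold gP; positivity, GAct.accept, ?_⟩
    have hlt := key.mpr h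
    ext b
    simp only [OptS, Set.mem_setOf_eq, Set.mem_singleton_iff]
    constructor
    · intro hb
      cases b with
      | accept => rfl
      | holdL =>
        exfalso
        have := hb GAct.accept
        rw [hA, hH _ GAct.holdL (by simp)] at this
        linarith
      | holdR =>
        exfalso
        have := hb GAct.accept
        rw [hA, hH _ GAct.holdR (by simp)] at this
        linarith
    · intro hb; subst hb
      intro c
      cases c with
      | accept => exact le_refl _
      | holdL => rw [hA, hH _ GAct.holdL (by simp)]; linarith
      | holdR => rw [hA, hH _ GAct.holdR (by simp)]; linarith
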